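/- arXiv:1810.01330 — 7 statements merged into one kernel-verified Lean document; each statement's English description precedes it below -/
import Mathlib

section
/- Let ψ be a unit vector in ℂ^d and A a Hermitian d×d complex matrix with Var_ψ(A) > 0. Define B = −i[A, |ψ⟩⟨ψ|] (a Hermitian matrix). Then ⟨ψ, i[A,B] ψ⟩ / ‖B‖ = 2 √(Var_ψ(A)); that is, the lower bound ⟨i[A,B]⟩_ψ / ‖B‖ on √(F(ψ,A)) is tight, where F(ψ,A) = 4 Var_ψ(A) is the quantum Fisher information of the pure state ψ with generator A. -/
open Matrix
open scoped Matrix.Norms.L2Operator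

/-- Expectation value `⟨ψ, A ψ⟩` (real part) of a matrix `A` in the state `ψ`. -/
noncomputable def expval {d : ℕ} (A : Matrix (Fin d) (Fin d) ℂ) (ψ : Fin d → ℂ) : ℝ :=
  (star ψ ⬝ᵥ A.mulVec ψ).re

/-- Variance `⟨A²⟩_ψ − ⟨A⟩_ψ²` of a matrix `A` in the state `ψ`. -/
noncomputable def variance {d : ℕ} (A : Matrix (Fin d) (Fin d) ℂ) (ψ : Fin d → ℂ) : ℝ :=
  expval (A * A) ψ - (expval A ψ) ^ 2

lemma euclid_norm_sq {d : ℕ} (y : Fin d → ℂ) :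
    ‖(WithLp.equiv 2 (Fin d → ℂ)).symm y‖ ^ 2 = (star y ⬝ᵥ y).re := by
  rw [← inner_self_eq_norm_sq (𝕜 := ℂ)]
  rw [EuclideanSpace.inner_eq_star_dotProduct, dotProduct_comm]
  rfl

lemma vecMulVec_mulVec' {d : ℕ} (w v x : Fin d → ℂ) :
    vecMulVec w v *ᵥ x = (v ⬝ᵥ x) • w := by
  funext i
  simp [vecMulVec_apply, mulVec, dotProduct, Finset.sum_mul, Finset.mul_sum]
  ring_nf

set_option maxHeartbeats 1000000 in
/-- For `B = −i[A, |ψ⟩⟨ψ|]`, the lower bound `⟨i[A,B]⟩_ψ / ‖B‖` on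
`√(F(ψ,A)) = 2√(Var_ψ(A))` is tight. -/
theorem qfi_bound_tight_for_pure_states {d : ℕ}
    (ψ : Fin d → ℂ) (hψ : star ψ ⬝ᵥ ψ = 1)
    (A : Matrix (Fin d) (Fin d) ℂ) (hA : A.IsHermitian)
    (hVar : 0 < variance A ψ)
    (B : Matrix (Fin d) (Fin d) ℂ)
    (hB : B = (-Complex.I) • (A * vecMulVec ψ (star ψ) - vecMulVec ψ (star ψ) * A)) :
    expval (Complex.I • (A * B - B * A)) ψ / ‖B‖ = 2 * Real.sqrt (variance A ψ) := by
  set a : ℂ := star ψ ⬝ᵥ A *ᵥ ψ with ha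
  -- ⟨ψ, A x⟩ = ⟨Aψ, x⟩
  have hAd : ∀ x : Fin d → ℂ, star ψ ⬝ᵥ A *ᵥ x = star (A *ᵥ ψ) ⬝ᵥ x := by
    intro x
    rw [star_mulVec, hA.eq, ← dotProduct_mulVec]
  have haR : star a = a := by
    rw [ha, ← star_dotProduct, ← hAd]
  set φ : Fin d → ℂ := A *ᵥ ψ - a • ψ with hφ
  have hAψ : A *ᵥ ψ = φ + a • ψ := by rw [hφ]; abel
  have hψφ : star ψ ⬝ᵥ φ = 0 := by
    rw [hφ, dotProduct_sub, dotProduct_smul, ← ha, hψ, smul_eq_mul, mul_one, sub_self]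
  have hφψ : star φ ⬝ᵥ ψ = 0 := by
    rw [star_dotProduct, hψφ, star_zero]
  have hstarφ : star φ = star (A *ᵥ ψ) - a • star ψ := by
    rw [hφ, star_sub, star_smul, haR]
  have haC : (expval A ψ : ℂ) = a := by
    have him : a.im = 0 := by
      have := congrArg Complex.im haR
      simp only [Complex.star_def, Complex.conj_im] at this
      linarith
    exact Complex.ext (by simp [expval, ha]) (by simp [him])
  have hAA : star (A *ᵥ ψ) ⬝ᵥ (A *ᵥ ψ) = star ψ ⬝ᵥ (A * A) *ᵥ ψ := by
    rw [← hAd, mulVec_mulVec]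
  have hφφ' : star φ ⬝ᵥ φ = star ψ ⬝ᵥ (A * A) *ᵥ ψ - a ^ 2 := by
    rw [hstarφ, hφ, sub_dotProduct, smul_dotProduct, dotProduct_sub, dotProduct_sub,
        dotProduct_smul, dotProduct_smul, hAA, ← hAd, ← ha, hψ]
    simp only [smul_eq_mul]; ring
  have hM2 : (expval (A * A) ψ : ℂ) = star ψ ⬝ᵥ (A * A) *ᵥ ψ := by
    open scoped ComplexOrder in
    have hpos : (0:ℂ) ≤ star (A *ᵥ ψ) ⬝ᵥ (A *ᵥ ψ) := dotProduct_star_self_nonneg _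
    rw [← hAA]
    refine Complex.ext (by simp [expval, hAA]) ?_
    have := (Complex.le_def.mp hpos).2
    simpa using this
  have hvC : (variance A ψ : ℂ) = star φ ⬝ᵥ φ := by
    rw [variance, hφφ']
    push_cast
    rw [hM2, haC]
  have hφφ : star φ ⬝ᵥ φ = ((variance A ψ : ℝ) : ℂ) := hvC.symm
  -- action of B
  have hBx : ∀ x : Fin d → ℂ,
      B *ᵥ x = (-Complex.I) • ((star ψ ⬝ᵥ x) • φ - (star φ ⬝ᵥ x) • ψ) := by
    intro x
    rw [hB, smul_mulVec]
    congr 1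
    rw [sub_mulVec, ← mulVec_mulVec, vecMulVec_mulVec', mulVec_smul, hAψ,
        ← mulVec_mulVec, vecMulVec_mulVec', hAd]
    have : star (A *ᵥ ψ) = star φ + a • star ψ := by rw [hstarφ]; abel
    rw [this, add_dotProduct, smul_dotProduct]
    simp only [smul_eq_mul, smul_add, add_smul, smul_smul]
    module
  have hsAψ : star (A *ᵥ ψ) = star φ + a • star ψ := by rw [hstarφ]; abel
  have hBψ : B *ᵥ ψ = (-Complex.I) • φ := by
    rw [hBx, hψ, hφψ]
    simp
  have h1 : star ψ ⬝ᵥ A *ᵥ φ = ((variance A ψ : ℝ) : ℂ) := by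
    rw [hAd, hsAψ, add_dotProduct, smul_dotProduct, hφφ, hψφ]
    simp
  have h2 : star φ ⬝ᵥ A *ᵥ ψ = ((variance A ψ : ℝ) : ℂ) := by
    rw [hAψ, dotProduct_add, dotProduct_smul, hφφ, hφψ]
    simp
  have hnum : star ψ ⬝ᵥ (Complex.I • (A * B - B * A)) *ᵥ ψ = 2 * ((variance A ψ : ℝ) : ℂ) := by
    rw [smul_mulVec, dotProduct_smul, sub_mulVec, dotProduct_sub,
        ← mulVec_mulVec, ← mulVec_mulVec, hBψ, mulVec_smul, dotProduct_smul, h1,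
        hBx, dotProduct_smul, dotProduct_sub, dotProduct_smul, dotProduct_smul,
        ← ha, h2, hψ, hψφ]
    simp only [smul_eq_mul]
    ring_nf
    rw [Complex.I_sq]
    ring
  have hexp : expval (Complex.I • (A * B - B * A)) ψ = 2 * variance A ψ := by
    rw [expval, hnum]
    simp
  set v : ℝ := variance A ψ with hvdef
  set s : ℝ := Real.sqrt v with hsdef
  have hs0 : 0 < s := Real.sqrt_pos.mpr hVar
  have hs2 : s ^ 2 = v := Real.sq_sqrt hVar.le
  -- norm of B
  have hBnorm : ‖B‖ = s := by
    rw [Matrix.l2_opNorm_def]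
    apply le_antisymm
    · apply ContinuousLinearMap.opNorm_le_bound _ hs0.le
      intro x
      set x' : Fin d → ℂ := (WithLp.equiv 2 (Fin d → ℂ)) x with hx'
      have hTx : (Matrix.toEuclideanLin.trans LinearMap.toContinuousLinearMap B) x
          = (WithLp.equiv 2 (Fin d → ℂ)).symm (B *ᵥ x') := rfl
      rw [hTx]
      set c : ℂ := star ψ ⬝ᵥ x' with hc
      set e : ℂ := star φ ⬝ᵥ x' with he
      have hxc : star x' ⬝ᵥ ψ = star c := by rw [hc, ← star_dotProduct]
      have hxe : star x' ⬝ᵥ φ = star e := by rw [he, ← star_dotProduct]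
      have hnsc : (starRingEnd ℂ) c * c = (Complex.normSq c : ℂ) := by
        rw [Complex.normSq_eq_conj_mul_self]
      have hnse : (starRingEnd ℂ) e * e = (Complex.normSq e : ℂ) := by
        rw [Complex.normSq_eq_conj_mul_self]
      have hcc : star (B *ᵥ x') ⬝ᵥ (B *ᵥ x')
          = ((Complex.normSq c * v + Complex.normSq e : ℝ) : ℂ) := by
        rw [hBx]
        simp only [star_smul, star_sub, smul_dotProduct, dotProduct_smul,
          sub_dotProduct, dotProduct_sub, smul_eq_mul, hφφ, hψφ, hφψ, hψ, ← hc, ← he,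
          star_neg, Complex.star_def, Complex.conj_I]
        push_cast
        linear_combination (-(c * (starRingEnd ℂ) c * (v:ℂ)) - (starRingEnd ℂ) e * e) *
          Complex.I_sq + ((v:ℝ):ℂ) * hnsc + hnse
      have hBxx : (star (B *ᵥ x') ⬝ᵥ (B *ᵥ x')).re
          = Complex.normSq c * v + Complex.normSq e := by
        rw [hcc, Complex.ofReal_re]
      -- Bessel inequality via the auxiliary vector y
      set y : Fin d → ℂ := x' - c • ψ - ((e / (v:ℂ)) • φ) with hy
      have hyy : (star y ⬝ᵥ y) = star x' ⬝ᵥ x'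
          - (Complex.normSq c : ℂ) - (Complex.normSq e : ℂ) / (v : ℂ) := by
        have hvne : ((v:ℝ):ℂ) ≠ 0 := by
          exact_mod_cast Complex.ofReal_ne_zero.mpr (ne_of_gt hVar)
        rw [hy]
        simp only [star_sub, star_smul, sub_dotProduct, dotProduct_sub,
          smul_dotProduct, dotProduct_smul, smul_eq_mul, hφφ, hψφ, hφψ, hψ,
          ← hc, ← he, hxc, hxe, star_div₀, Complex.star_def, Complex.conj_ofReal,
          Complex.normSq_eq_conj_mul_self]
        field_simp
        ring
      have hypos : 0 ≤ (star y ⬝ᵥ y).re := by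
        open scoped ComplexOrder in
        have := dotProduct_star_self_nonneg y
        exact (Complex.le_def.mp this).1
      have hXre : (star x' ⬝ᵥ x').re = ‖x‖ ^ 2 := by
        rw [← euclid_norm_sq]
        congr 1
      have hbes : Complex.normSq c * v + Complex.normSq e ≤ v * ‖x‖ ^ 2 := by
        rw [hyy] at hypos
        simp only [Complex.sub_re, Complex.ofReal_re] at hypos
        have hdivre : ((Complex.normSq e : ℂ) / (v : ℂ)).re = Complex.normSq e / v := by
          rw [← Complex.ofReal_div]
          simp
        rw [hdivre, hXre] at hypos
        have hv0 : (0:ℝ) < v := hVar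
        have h3 : Complex.normSq e / v ≤ ‖x‖ ^ 2 - Complex.normSq c := by linarith
        rw [div_le_iff₀ hv0] at h3
        nlinarith
      have hsq : ‖(WithLp.equiv 2 (Fin d → ℂ)).symm (B *ᵥ x')‖ ^ 2
          ≤ (s * ‖x‖) ^ 2 := by
        rw [euclid_norm_sq, hBxx]
        have : (s * ‖x‖) ^ 2 = v * ‖x‖ ^ 2 := by rw [mul_pow, hs2]
        rw [this]
        exact hbes
      nlinarith [norm_nonneg ((WithLp.equiv 2 (Fin d → ℂ)).symm (B *ᵥ x')),
        mul_nonneg hs0.le (norm_nonneg x)]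
    · have hle := (Matrix.toEuclideanLin.trans LinearMap.toContinuousLinearMap B).le_opNorm
        ((WithLp.equiv 2 (Fin d → ℂ)).symm ψ)
      have hTψ : (Matrix.toEuclideanLin.trans LinearMap.toContinuousLinearMap B)
          ((WithLp.equiv 2 (Fin d → ℂ)).symm ψ)
          = (WithLp.equiv 2 (Fin d → ℂ)).symm (B *ᵥ ψ) := rfl
      have hnψ : ‖(WithLp.equiv 2 (Fin d → ℂ)).symm ψ‖ = 1 := by
        have h := euclid_norm_sq ψ
        rw [hψ] at h
        simp only [Complex.one_re] at h
        nlinarith [norm_nonneg ((WithLp.equiv 2 (Fin d → ℂ)).symm ψ)]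
      have hnφ : ‖(WithLp.equiv 2 (Fin d → ℂ)).symm (B *ᵥ ψ)‖ = s := by
        have h := euclid_norm_sq (B *ᵥ ψ)
        rw [hBψ] at h ⊢
        have : (star ((-Complex.I) • φ) ⬝ᵥ ((-Complex.I) • φ)).re = v := by
          simp only [star_smul, smul_dotProduct, dotProduct_smul, smul_eq_mul,
            Complex.star_def, map_neg, Complex.conj_I, hφφ]
          ring_nf
          rw [Complex.I_sq]
          simp
        rw [this] at h
        nlinarith [norm_nonneg ((WithLp.equiv 2 (Fin d → ℂ)).symm ((-Complex.I) • φ)),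
          Real.sq_sqrt hVar.le, Real.sqrt_nonneg v]
      rw [hTψ, hnψ, mul_one, hnφ] at hle
      exact hle

  rw [hexp, hBnorm]
  rw [← hs2]
  field_simp
end

section
/- For every N ≥ 1 and all x, y ∈ {−1, 1}^N (deterministic local-variable assignments for two measurement settings at each of N sites), the two-body Bell expression of inequality (17) is nonnegative: (Σ_{i} x_i − Σ_{i} y_i) + (1/2) Σ_{i≠j} x_i x_j + Σ_{i≠j} x_i y_j + (1/2) Σ_{i≠j} y_i y_j + 2N ≥ 0, where the double sums run over all ordered pairs (i,j) with i ≠ j. -/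
open Finset

lemma sum_offdiag {N : ℕ} (f g : Fin N → ℝ) :
    ∑ i, ∑ j, (if i ≠ j then f i * g j else 0)
      = (∑ i, f i) * (∑ j, g j) - ∑ i, f i * g i := by
  rw [Finset.sum_mul_sum, ← Finset.sum_sub_distrib]
  refine Finset.sum_congr rfl fun i _ => ?_
  have : ∀ j : Fin N, (if i ≠ j then f i * g j else 0)
      = f i * g j - (if i = j then f i * g j else 0) := by
    intro j; by_cases h : i = j <;> simp [h]
  rw [Finset.sum_congr rfl fun j _ => this j, Finset.sum_sub_distrib,
    Finset.sum_ite_eq Finset.univ i (fun j => f i * g j)]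
  simp

/-- Local (deterministic hidden-variable) bound of the two-setting two-body Bell
inequality `C₀ − C₁ + ½C₀₀ + C₀₁ + ½C₁₁ + 2N ≥ 0`. -/
theorem bell_ineq_local_bound (N : ℕ) (hN : 1 ≤ N)
    (x y : Fin N → ℝ)
    (hx : ∀ i, x i = 1 ∨ x i = -1) (hy : ∀ i, y i = 1 ∨ y i = -1) :
    0 ≤ (∑ i, x i - ∑ i, y i)
        + (1 / 2) * (∑ i, ∑ j, if i ≠ j then x i * x j else 0)
        + (∑ i, ∑ j, if i ≠ j then x i * y j else 0)
        + (1 / 2) * (∑ i, ∑ j, if i ≠ j then y i * y j else 0)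
        + 2 * N := by
  have hxx : ∑ i, x i * x i = (N : ℝ) := by
    have : ∀ i ∈ Finset.univ, x i * x i = (1 : ℝ) := by
      intro i _; rcases hx i with h | h <;> rw [h] <;> norm_num
    rw [Finset.sum_congr rfl this]; simp
  have hyy : ∑ i, y i * y i = (N : ℝ) := by
    have : ∀ i ∈ Finset.univ, y i * y i = (1 : ℝ) := by
      intro i _; rcases hy i with h | h <;> rw [h] <;> norm_num
    rw [Finset.sum_congr rfl this]; simp
  have h1 : 0 ≤ ∑ i, (x i - y i + 1 - x i * y i) := by
    apply Finset.sum_nonneg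
    intro i _
    rcases hx i with h | h <;> rcases hy i with h' | h' <;> rw [h, h'] <;> norm_num
  have h1' : ∑ i, (x i - y i + 1 - x i * y i)
      = (∑ i, x i) - (∑ i, y i) + N - ∑ i, x i * y i := by
    rw [Finset.sum_sub_distrib, Finset.sum_add_distrib, Finset.sum_sub_distrib]
    simp
  rw [sum_offdiag, sum_offdiag, sum_offdiag, hxx, hyy]
  rw [h1'] at h1
  nlinarith [sq_nonneg ((∑ i, x i) + (∑ i, y i)), h1]
end

section
/- Let z, C be real numbers with 0 ≤ z ≤ 1 and 0 ≤ C ≤ 1. Then there exists s ∈ [−1, 1] with (1 − z)s² − C s + z < 0 if and only if z < (1/2)(1 − √(1 − C²)). (Here z plays the role of the scaled second moment ζ² and s = sin φ the measurement-angle parameter; this is the optimization over the measurement angle φ that turns the Bell inequality (17) into the Bell-correlation witness ζ² ≥ (1/2)(1 − √(1 − C²)).) -/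
/-- Optimizing over the measurement angle: there exists `s = sin φ ∈ [−1,1]` with
`(1 − z)s² − Cs + z < 0` iff `z < (1/2)(1 − √(1 − C²))`. -/
theorem witness_from_angle_optimization (z C : ℝ)
    (hz : 0 ≤ z) (hz1 : z ≤ 1) (hC : 0 ≤ C) (hC1 : C ≤ 1) :
    (∃ s ∈ Set.Icc (-1 : ℝ) 1, (1 - z) * s ^ 2 - C * s + z < 0) ↔
      z < (1 / 2) * (1 - Real.sqrt (1 - C ^ 2)) := by
  have hC2 : C ^ 2 ≤ 1 := by nlinarith
  set r := Real.sqrt (1 - C ^ 2) with hr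
  have hr0 : 0 ≤ r := Real.sqrt_nonneg _
  have hr2 : r ^ 2 = 1 - C ^ 2 := Real.sq_sqrt (by nlinarith)
  constructor
  · rintro ⟨s, ⟨hs1, hs2⟩, hf⟩
    have hsq : (0:ℝ) ≤ 1 - s ^ 2 := by nlinarith
    have hsC : s * s < C * s := by nlinarith [mul_nonneg hz hsq]
    have hspos : 0 < s := by nlinarith
    have hslt : s < 1 := by nlinarith
    have hs2pos : 0 < 1 - s ^ 2 := by nlinarith
    nlinarith [sq_nonneg (C - s * (1 + r)), mul_pos hs2pos (mul_pos hspos hspos),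
      mul_nonneg hr0 (le_of_lt hs2pos), mul_nonneg hr0 (sq_nonneg (C - s * (1 + r)))]
  · intro h
    have hz2 : z < 1 / 2 := by nlinarith
    have h1z : 0 < 1 - z := by linarith
    have hkey : 4 * z * (1 - z) < C ^ 2 := by nlinarith
    refine ⟨C / (2 * (1 - z)), ⟨?_, ?_⟩, ?_⟩
    · have : 0 ≤ C / (2 * (1 - z)) := by positivity
      linarith
    · rw [div_le_one (by linarith)]
      linarith
    · have hs : C / (2 * (1 - z)) * (2 * (1 - z)) = C := by
        field_simp
      set s := C / (2 * (1 - z)) with hsdef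
      nlinarith [sq_nonneg s, hs, hkey]
end

section
/- Let ξ², C be real numbers with 1/4 < ξ² < 1/2 and 0 < C ≤ 1. Then ξ² C² < (1/2)(1 − √(1 − C²)) if and only if C² > 1 − (1/(2ξ²) − 1)². (Hence for 1/4 < ξ² < 1/2 the Bell-correlation witness is violated exactly when the contrast C exceeds the threshold √(1 − (1/(2ξ²) − 1)²).) -/
/-- For `1/4 < ξ² < 1/2` the Bell-correlation witness is violated iff the contrast
exceeds the threshold: `ξ²C² < (1/2)(1 − √(1 − C²)) ↔ C² > 1 − (1/(2ξ²) − 1)²`. -/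
theorem witness_violation_threshold (ξsq C : ℝ)
    (hξ : 1 / 4 < ξsq) (hξ2 : ξsq < 1 / 2) (hC : 0 < C) (hC1 : C ≤ 1) :
    ξsq * C ^ 2 < (1 / 2) * (1 - Real.sqrt (1 - C ^ 2)) ↔
      1 - (1 / (2 * ξsq) - 1) ^ 2 < C ^ 2 := by
  have hCsq : 0 < C ^ 2 := by positivity
  have hC2le : C ^ 2 ≤ 1 := by nlinarith
  set s := Real.sqrt (1 - C ^ 2) with hsdef
  have hs0 : 0 ≤ s := Real.sqrt_nonneg _
  have hs2 : s ^ 2 = 1 - C ^ 2 := by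
    rw [hsdef, sq, Real.mul_self_sqrt (by linarith)]
  have hs1 : s < 1 := by nlinarith
  have hξ0 : 0 < ξsq := by linarith
  have ht : 1 / (2 * ξsq) - 1 = (1 - 2 * ξsq) / (2 * ξsq) := by
    field_simp
  constructor
  · intro h
    have hstep : ξsq * (1 + s) < 1 / 2 := by nlinarith
    have hst : s < 1 / (2 * ξsq) - 1 := by
      rw [ht, lt_div_iff₀ (by linarith)]; nlinarith
    nlinarith
  · intro h
    have hst : s < 1 / (2 * ξsq) - 1 := by
      have htpos : 0 < 1 / (2 * ξsq) - 1 := by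
        rw [ht]; exact div_pos (by linarith) (by linarith)
      nlinarith
    have hst' : 2 * ξsq * s < 1 - 2 * ξsq := by
      rw [ht, lt_div_iff₀ (by linarith : (0:ℝ) < 2 * ξsq)] at hst
      linarith
    nlinarith
end

section
/- Let ξ², C be real numbers with 0 < ξ² ≤ 1/3 and 0 < C < 1. Then ξ² C² < 1 − C/artanh(C). (Hence for squeezing parameter ξ² ≤ 1/3 the multi-setting Bell-correlation witness ζ² ≥ 1 − C/artanh(C) is violated for every contrast C ∈ (0,1), where ζ² = ξ² C².) -/
/-- Inverse hyperbolic tangent: `artanh x = (1/2) log((1+x)/(1−x))`. -/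
noncomputable def artanh (x : ℝ) : ℝ := (1 / 2) * Real.log ((1 + x) / (1 - x))

private noncomputable def faux (x : ℝ) : ℝ :=
  (1/2)*(Real.log (1+x) - Real.log (1-x)) - 3*x/(3-x^2)

private lemma hasDerivAt_faux {x : ℝ} (hx1 : -1 < x) (hx2 : x < 1) :
    HasDerivAt faux (4*x^4/((1-x^2)*(3-x^2)^2)) x := by
  have h1 : (0:ℝ) < 1 + x := by linarith
  have h2 : (0:ℝ) < 1 - x := by linarith
  have h3 : (0:ℝ) < 3 - x^2 := by nlinarith
  have d1 : HasDerivAt (fun y : ℝ => Real.log (1+y)) (1/(1+x)) x := by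
    have := ((hasDerivAt_id x).const_add 1).log h1.ne'
    simpa using this
  have d2 : HasDerivAt (fun y : ℝ => Real.log (1-y)) (-1/(1-x)) x := by
    have := ((hasDerivAt_id x).const_sub 1).log h2.ne'
    simpa using this
  have dnum : HasDerivAt (fun y : ℝ => 3*y) 3 x := by
    simpa using (hasDerivAt_id x).const_mul 3
  have dden : HasDerivAt (fun y : ℝ => 3 - y^2) (-(2*x)) x := by
    simpa using (hasDerivAt_pow 2 x).const_sub 3
  have ddiv : HasDerivAt (fun y : ℝ => 3*y/(3-y^2))
      ((3*(3-x^2) - 3*x*(-(2*x)))/(3-x^2)^2) x := dnum.div dden h3.ne'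
  have := (((d1.sub d2).const_mul (1/2)).sub ddiv)
  have h4 : (0:ℝ) < 1 - x^2 := by nlinarith
  refine HasDerivAt.congr_deriv (f := faux) this ?_
  field_simp [h1.ne', h2.ne', h3.ne', h4.ne']
  ring

private lemma faux_pos {x : ℝ} (hx0 : 0 < x) (hx1 : x < 1) : 0 < faux x := by
  have hmono : StrictMonoOn faux (Set.Icc 0 x) := by
    apply strictMonoOn_of_deriv_pos (convex_Icc 0 x)
    · intro y hy
      have hy1 : -1 < y := by have := hy.1; linarith
      have hy2 : y < 1 := by have := hy.2; linarith
      exact (hasDerivAt_faux hy1 hy2).differentiableAt.continuousAt.continuousWithinAt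
    · intro y hy
      rw [interior_Icc] at hy
      have hy1 : (0:ℝ) < y := hy.1
      have hy2 : y < 1 := lt_of_lt_of_le hy.2 hx1.le
      rw [(hasDerivAt_faux (by linarith) hy2).deriv]
      have : (0:ℝ) < 1 - y^2 := by nlinarith
      have h3 : (0:ℝ) < 3 - y^2 := by nlinarith
      positivity
  have h0 : faux 0 = 0 := by simp [faux]
  have := hmono (Set.left_mem_Icc.2 hx0.le) (Set.right_mem_Icc.2 hx0.le) hx0
  linarith [this, h0.symm ▸ this]

/-- For squeezing `ξ² ≤ 1/3` the multi-setting Bell-correlation witness is violated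
for every contrast `C ∈ (0,1)`: `ξ²C² < 1 − C/artanh C`. -/
theorem multisetting_witness_violated_for_strong_squeezing (ξsq C : ℝ)
    (hξ : 0 < ξsq) (hξ3 : ξsq ≤ 1 / 3) (hC : 0 < C) (hC1 : C < 1) :
    ξsq * C ^ 2 < 1 - C / artanh C := by
  have h1 : (0:ℝ) < 1 + C := by linarith
  have h2 : (0:ℝ) < 1 - C := by linarith
  have h3 : (0:ℝ) < 3 - C^2 := by nlinarith
  have heq : artanh C = (1/2)*(Real.log (1+C) - Real.log (1-C)) := by
    rw [artanh, Real.log_div h1.ne' h2.ne']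
  have hkey : 3*C/(3-C^2) < artanh C := by
    have := faux_pos hC hC1
    rw [faux] at this
    linarith [heq]
  have hb : (0:ℝ) < 3*C/(3-C^2) := by positivity
  have hart : 0 < artanh C := lt_trans hb hkey
  have hdiv : C / artanh C < C / (3*C/(3-C^2)) :=
    div_lt_div_of_pos_left hC hb hkey
  have hcomp : C / (3*C/(3-C^2)) = (3-C^2)/3 := by
    field_simp
  have : ξsq * C ^ 2 ≤ (1/3) * C^2 := by nlinarith
  nlinarith [hdiv, hcomp ▸ hdiv]
end

section
/- Let ξ², C be real numbers with ξ² ≥ 1 and 0 < C < 1. Then ξ² C² ≥ 1 − C/artanh(C). (Hence violation of the multi-setting Bell-correlation witness ζ² ≥ 1 − C/artanh(C), with ζ² = ξ²C², requires squeezing ξ² < 1, i.e. a quantum Fisher information F(ρ, S_z) ≥ N/ξ² exceeding the separable-state bound N.) -/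
lemma log_key (C : ℝ) (hC : 0 < C) (hC1 : C < 1) :
    Real.log ((1 + C) / (1 - C)) ≤ 2 * C / (1 - C ^ 2) := by
  set f : ℝ → ℝ := fun x => 2 * x / (1 - x ^ 2) - Real.log (1 + x) + Real.log (1 - x) with hf
  have hder : ∀ x ∈ Set.Ico (0:ℝ) 1,
      HasDerivAt f (4 * x ^ 2 / (1 - x ^ 2) ^ 2) x := by
    intro x hx
    obtain ⟨hx0, hx1⟩ := hx
    have h1x : (0:ℝ) < 1 - x := by linarith
    have h1x' : (0:ℝ) < 1 + x := by linarith
    have hden : (1 - x ^ 2) ≠ 0 := by nlinarith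
    have h1 : HasDerivAt (fun x : ℝ => 2 * x / (1 - x ^ 2))
        ((2 * (1 - x ^ 2) - 2 * x * (-(2 * x))) / (1 - x ^ 2) ^ 2) x := by
      have ha : HasDerivAt (fun x : ℝ => 2 * x) 2 x := by
        simpa using (hasDerivAt_id x).const_mul 2
      have hb : HasDerivAt (fun x : ℝ => 1 - x ^ 2) (-(2 * x)) x := by
        have := (hasDerivAt_pow 2 x).const_sub 1
        simpa using this
      exact ha.div hb hden
    have h2 : HasDerivAt (fun x : ℝ => Real.log (1 + x)) (1 / (1 + x)) x := by
      have ha : HasDerivAt (fun x : ℝ => 1 + x) 1 x := (hasDerivAt_id x).const_add 1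
      simpa using ha.log h1x'.ne'
    have h3 : HasDerivAt (fun x : ℝ => Real.log (1 - x)) ((-1) / (1 - x)) x := by
      have ha : HasDerivAt (fun x : ℝ => 1 - x) (-1) x := by
        simpa using (hasDerivAt_id x).const_sub 1
      simpa using ha.log h1x.ne'
    have := (h1.sub h2).add h3
    convert this using 1
    · rfl
    · rfl
    · rfl
    · field_simp
      ring
  have hmono : MonotoneOn f (Set.Ico (0:ℝ) 1) := by
    apply monotoneOn_of_deriv_nonneg (convex_Ico 0 1)
    · intro x hx
      exact (hder x hx).continuousAt.continuousWithinAt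
    · intro x hx
      rw [interior_Ico] at hx
      exact ((hder x ⟨hx.1.le, hx.2⟩).differentiableAt).differentiableWithinAt
    · intro x hx
      rw [interior_Ico] at hx
      rw [(hder x ⟨hx.1.le, hx.2⟩).deriv]
      positivity
  have h0 : f 0 = 0 := by simp [hf]
  have hfC : 0 ≤ f C := by
    have := hmono (Set.mem_Ico.2 ⟨le_refl 0, one_pos⟩) (Set.mem_Ico.2 ⟨hC.le, hC1⟩) hC.le
    rw [h0] at this
    exact this
  have h1x : (0:ℝ) < 1 - C := by linarith
  have h1x' : (0:ℝ) < 1 + C := by linarith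
  rw [Real.log_div h1x'.ne' h1x.ne']
  simp only [hf] at hfC
  linarith

/-- For squeezing `ξ² ≥ 1` the multi-setting Bell-correlation witness is never
violated: `ξ²C² ≥ 1 − C/artanh C`. -/
theorem multisetting_witness_needs_squeezing (ξsq C : ℝ)
    (hξ : 1 ≤ ξsq) (hC : 0 < C) (hC1 : C < 1) :
    1 - C / artanh C ≤ ξsq * C ^ 2 := by
  have h1x : (0:ℝ) < 1 - C := by linarith
  have h1x' : (0:ℝ) < 1 + C := by linarith
  have hCsq : (0:ℝ) < 1 - C ^ 2 := by nlinarith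
  have hart_pos : 0 < artanh C := by
    unfold artanh
    have : (1:ℝ) < (1 + C) / (1 - C) := by
      rw [lt_div_iff₀ h1x]; linarith
    have := Real.log_pos this
    linarith
  have hart_le : artanh C ≤ C / (1 - C ^ 2) := by
    unfold artanh
    have h := log_key C hC hC1
    have h2 : 2 * C / (1 - C ^ 2) = 2 * (C / (1 - C ^ 2)) := by ring
    linarith
  -- C / artanh C ≥ 1 - C²
  have hdiv : 1 - C ^ 2 ≤ C / artanh C := by
    rw [le_div_iff₀ hart_pos]
    calc (1 - C ^ 2) * artanh C ≤ (1 - C ^ 2) * (C / (1 - C ^ 2)) := by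
          exact mul_le_mul_of_nonneg_left hart_le hCsq.le
      _ = C := by field_simp
  have : 1 - C / artanh C ≤ C ^ 2 := by linarith
  calc 1 - C / artanh C ≤ C ^ 2 := this
    _ = 1 * C ^ 2 := (one_mul _).symm
    _ ≤ ξsq * C ^ 2 := by nlinarith
end

section
/- Let ξ² be a real number with 1/3 < ξ² < 1. Then there exists C ∈ (0,1) with ξ² C² < 1 − C/artanh(C), and there also exists C ∈ (0,1) with ξ² C² ≥ 1 − C/artanh(C). (Hence for 1/3 < ξ² < 1 the multi-setting Bell-correlation witness is violated for some but not all values of the contrast: a minimal contrast C is needed.) -/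
/-- Series upper bound for `artanh`. -/
lemma artanh_le (C : ℝ) (h0 : 0 ≤ C) (h1 : C < 1) :
    artanh C ≤ C + C ^ 3 / 3 + C ^ 5 / (1 - C) := by
  have hC : |C| < 1 := by rw [abs_of_nonneg h0]; exact h1
  have h1' : (0:ℝ) < 1 - C := by linarith
  have hA := Real.abs_log_sub_add_sum_range_le hC 4
  have hC' : |(-C)| < 1 := by rwa [abs_neg]
  have hB := Real.abs_log_sub_add_sum_range_le hC' 4
  rw [abs_neg, abs_of_nonneg h0] at hB
  rw [abs_of_nonneg h0] at hA
  simp only [Finset.sum_range_succ, Finset.sum_range_zero] at hA hB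
  rw [abs_le] at hA hB
  have hA1 := hA.1
  have hB2 := hB.2
  have heq : (1 : ℝ) - (-C) = 1 + C := by ring
  rw [heq] at hB2
  have hlog : Real.log ((1 + C) / (1 - C)) = Real.log (1 + C) - Real.log (1 - C) := by
    rw [Real.log_div (by linarith) (by linarith)]
  rw [artanh, hlog]
  push_cast at hA1 hB2
  nlinarith [hA1, hB2]

lemma artanh_pos (C : ℝ) (h0 : 0 < C) (h1 : C < 1) : 0 < artanh C := by
  have h1' : (0:ℝ) < 1 - C := by linarith
  have : (1:ℝ) < (1 + C) / (1 - C) := by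
    rw [lt_div_iff₀ h1']; linarith
  have := Real.log_pos this
  unfold artanh; linarith

/-- For `1/3 < ξ² < 1` the multi-setting Bell-correlation witness is violated for
some but not all contrasts `C ∈ (0,1)`. -/
theorem multisetting_witness_minimal_contrast (ξsq : ℝ)
    (hξ : 1 / 3 < ξsq) (hξ1 : ξsq < 1) :
    (∃ C ∈ Set.Ioo (0 : ℝ) 1, ξsq * C ^ 2 < 1 - C / artanh C) ∧
      (∃ C ∈ Set.Ioo (0 : ℝ) 1, 1 - C / artanh C ≤ ξsq * C ^ 2) := by
  constructor
  · -- violation near C = 1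
    set M : ℝ := 1 / (1 - ξsq) + 1 with hM
    have hξpos : (0:ℝ) < 1 - ξsq := by linarith
    have hMpos : 0 < M := by positivity
    have h1M : 1 / M < 1 - ξsq := by
      rw [div_lt_iff₀ hMpos, hM]
      have : (1 - ξsq) * (1 / (1 - ξsq)) = 1 := by field_simp
      nlinarith
    set C : ℝ := 1 - Real.exp (-(2 * M)) with hCdef
    have hexp : Real.exp (-(2 * M)) < 1 := by
      rw [Real.exp_lt_one_iff]; linarith
    have hexppos : 0 < Real.exp (-(2 * M)) := Real.exp_pos _
    have hC0 : 0 < C := by simp only [hCdef]; linarith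
    have hC1 : C < 1 := by simp only [hCdef]; linarith
    refine ⟨C, ⟨hC0, hC1⟩, ?_⟩
    have hf : M ≤ artanh C := by
      have h1C : 1 - C = Real.exp (-(2 * M)) := by simp [hCdef]
      have hrat : Real.exp (2 * M) ≤ (1 + C) / (1 - C) := by
        rw [h1C, le_div_iff₀ hexppos, ← Real.exp_add]
        simp only [add_neg_cancel, Real.exp_zero]
        linarith
      have h2 : 2 * M ≤ Real.log ((1 + C) / (1 - C)) := by
        calc 2 * M = Real.log (Real.exp (2 * M)) := (Real.log_exp _).symm
        _ ≤ _ := Real.log_le_log (Real.exp_pos _) hrat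
      unfold artanh; linarith
    have hfpos : 0 < artanh C := lt_of_lt_of_le hMpos hf
    have hdiv : C / artanh C ≤ C / M := by gcongr
    have hdiv2 : C / M < 1 / M := by gcongr
    clear_value M C
    have hCsq : C ^ 2 < 1 := by nlinarith
    have h2 : ξsq * C ^ 2 < ξsq := by nlinarith
    have h3 : C / artanh C < 1 - ξsq := by linarith
    linarith [h2, h3]
  · -- no violation near C = 0
    have hs : (0:ℝ) < (ξsq - 1/3) / 2 := by linarith
    set C : ℝ := min (1/2) (Real.sqrt ((ξsq - 1/3) / 2)) with hCdef
    have hC0 : 0 < C := lt_min (by norm_num) (Real.sqrt_pos.mpr hs)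
    have hChalf : C ≤ 1/2 := min_le_left _ _
    have hC1 : C < 1 := lt_of_le_of_lt hChalf (by norm_num)
    have hC2 : C ^ 2 ≤ (ξsq - 1/3) / 2 := by
      have h := min_le_right (1/2 : ℝ) (Real.sqrt ((ξsq - 1/3) / 2))
      calc C ^ 2 ≤ (Real.sqrt ((ξsq - 1/3) / 2)) ^ 2 := by
            apply pow_le_pow_left₀ hC0.le h
      _ = (ξsq - 1/3) / 2 := Real.sq_sqrt hs.le
    refine ⟨C, ⟨hC0, hC1⟩, ?_⟩
    have h1C : (0:ℝ) < 1 - C := by linarith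
    have hfpos : 0 < artanh C := artanh_pos C hC0 hC1
    have hU : artanh C ≤ C + C ^ 3 / 3 + C ^ 5 / (1 - C) := artanh_le C hC0.le hC1
    have hD : C ^ 5 / (1 - C) ≤ 2 * C ^ 5 := by
      rw [div_le_iff₀ h1C]
      nlinarith [pow_pos hC0 5]
    have hkey : artanh C * (1 - ξsq * C ^ 2) ≤ C := by
      have hfact : 0 ≤ 1 - ξsq * C ^ 2 := by nlinarith
      have hUC : C + C ^ 3 / 3 + C ^ 5 / (1 - C) ≤ C + ξsq * C ^ 3 := by
        nlinarith [pow_pos hC0 3]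
      calc artanh C * (1 - ξsq * C ^ 2) ≤ (C + ξsq * C ^ 3) * (1 - ξsq * C ^ 2) := by
            apply mul_le_mul_of_nonneg_right (le_trans hU hUC) hfact
      _ ≤ C := by nlinarith [pow_pos hC0 3, pow_pos hC0 5, sq_nonneg (ξsq * C)]
    have : 1 - ξsq * C ^ 2 ≤ C / artanh C := by
      rw [le_div_iff₀ hfpos]; linarith [hkey]
    linarith
end
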